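/- Let P be a Markov kernel on a measurable space E satisfying the global minorization condition (A.2) with d ∈ (0,1): there is a probability measure η on E with P(x,B) ≥ d·η(B) for all x ∈ E and measurable B. Let g : E → ℝ be bounded measurable with ‖g‖_sp < −(1/2)·log(1−d). Then a bounded MPE solution exists: there are a bounded measurable w : E → ℝ and λ ∈ ℝ such that w(x) = g(x) − λ + μ_x(w) for all x ∈ E. -/

import Mathlib

open MeasureTheory ProbabilityTheory Real
open scoped ENNReal NNReal

namespace MPEAux
variable {E : Type*} [MeasurableSpace E]

variable {E : Type*} [MeasurableSpace E]

lemma integrable_of_abs_le {μ : Measure E} [IsFiniteMeasure μ] {f : E → ℝ} (hf : Measurable f)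
    {C : ℝ} (hC : ∀ x, |f x| ≤ C) : Integrable f μ :=
  (integrable_const C).mono' hf.aestronglyMeasurable (ae_of_all _ hC)

lemma measure_le_of_minor {η μ : Measure E} [IsProbabilityMeasure η] [IsProbabilityMeasure μ]
    {d : ℝ} (hd0 : 0 ≤ d) (h : ∀ B, MeasurableSet B → d * (η B).toReal ≤ (μ B).toReal) :
    ENNReal.ofReal d • η ≤ μ := by
  rw [Measure.le_iff]
  intro B hB
  have h1 := h B hB
  rw [Measure.smul_apply, smul_eq_mul]
  calc ENNReal.ofReal d * η B = ENNReal.ofReal (d * (η B).toReal) := by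
        rw [ENNReal.ofReal_mul hd0, ENNReal.ofReal_toReal (measure_ne_top _ _)]
    _ ≤ ENNReal.ofReal ((μ B).toReal) := ENNReal.ofReal_le_ofReal h1
    _ = μ B := ENNReal.ofReal_toReal (measure_ne_top _ _)

lemma smul_integral_le {ν η : Measure E} [IsProbabilityMeasure ν] [IsProbabilityMeasure η]
    {α : ℝ} (hα : 0 ≤ α) (hle : ENNReal.ofReal α • η ≤ ν)
    {v : E → ℝ} (hv : Measurable v) (hv0 : ∀ x, 0 ≤ v x) {K : ℝ} (hvK : ∀ x, |v x| ≤ K) :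
    α * ∫ x, v x ∂η ≤ ∫ x, v x ∂ν := by
  have hint : Integrable v ν := integrable_of_abs_le hv hvK
  have h2 := integral_mono_measure hle (ae_of_all _ hv0) hint
  rwa [integral_smul_measure, ENNReal.toReal_ofReal hα, smul_eq_mul] at h2

lemma integral_lb_of_minor {ν η : Measure E} [IsProbabilityMeasure ν] [IsProbabilityMeasure η]
    {α : ℝ} (hα : 0 ≤ α) (hle : ENNReal.ofReal α • η ≤ ν)
    {u : E → ℝ} (hu : Measurable u) {m M : ℝ} (hm : ∀ x, m ≤ u x) (hM : ∀ x, u x ≤ M) :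
    α * ∫ x, u x ∂η + (1 - α) * m ≤ ∫ x, u x ∂ν := by
  have habs : ∀ x, |u x - m| ≤ M - m := fun x => by
    rw [abs_le]; constructor <;> [linarith [hm x, hM x]; linarith [hM x]]
  have h := smul_integral_le (v := fun x => u x - m) hα hle (hu.sub measurable_const)
    (fun x => by show 0 ≤ u x - m; linarith [hm x]) habs
  have hbd : ∀ x, |u x| ≤ |m| + |M| := fun x => by
    rw [abs_le]
    constructor <;> [skip; skip] <;>
      [linarith [hm x, neg_abs_le m, abs_nonneg M]; linarith [hM x, le_abs_self M, abs_nonneg m]]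
  have hiν : Integrable u ν := integrable_of_abs_le hu hbd
  have hiη : Integrable u η := integrable_of_abs_le hu hbd
  rw [integral_sub hiν (integrable_const m), integral_sub hiη (integrable_const m),
    integral_const, integral_const] at h
  simp only [probReal_univ, measure_univ, ENNReal.toReal_one, one_smul] at h
  nlinarith [h]

lemma integral_ub_of_minor {ν η : Measure E} [IsProbabilityMeasure ν] [IsProbabilityMeasure η]
    {α : ℝ} (hα : 0 ≤ α) (hle : ENNReal.ofReal α • η ≤ ν)
    {u : E → ℝ} (hu : Measurable u) {m M : ℝ} (hm : ∀ x, m ≤ u x) (hM : ∀ x, u x ≤ M) :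
    ∫ x, u x ∂ν ≤ α * ∫ x, u x ∂η + (1 - α) * M := by
  have h := integral_lb_of_minor (u := fun x => -u x) hα hle hu.neg (m := -M) (M := -m)
    (fun x => by simpa using hM x) (fun x => by simpa using hm x)
  rw [integral_neg, integral_neg] at h
  linarith

lemma exp_integral_le {ν : Measure E} [IsProbabilityMeasure ν] {u : E → ℝ}
    (hu : Measurable u) {C : ℝ} (hC : ∀ x, |u x| ≤ C) :
    Real.exp (∫ x, u x ∂ν) ≤ ∫ x, Real.exp (u x) ∂ν := by
  have h1 : Integrable u ν := integrable_of_abs_le hu hC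
  have h2 : Integrable (fun x => Real.exp (u x)) ν := integrable_of_abs_le
    (Real.measurable_exp.comp hu) (C := Real.exp C) (fun x => by
      rw [abs_of_nonneg (Real.exp_nonneg _)]
      exact Real.exp_le_exp.2 (le_trans (le_abs_self _) (hC x)))
  exact convexOn_exp.map_integral_le Real.continuous_exp.continuousOn isClosed_univ
    (ae_of_all _ (fun x => Set.mem_univ _)) h1 h2


/-- The exponentially tilted (normalized) measure. -/
noncomputable def tilt (μ : Measure E) (f : E → ℝ) : Measure E :=
  (ENNReal.ofReal (∫ x, Real.exp (f x) ∂μ))⁻¹ •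
    μ.withDensity (fun y => ENNReal.ofReal (Real.exp (f y)))

variable {μ : Measure E} [IsProbabilityMeasure μ] {f : E → ℝ} {R : ℝ}

lemma exp_comp_integrable (hf : Measurable f) (hfR : ∀ x, |f x| ≤ R) :
    Integrable (fun x => Real.exp (f x)) μ :=
  integrable_of_abs_le (Real.measurable_exp.comp hf) (C := Real.exp R) (fun x => by
    rw [abs_of_nonneg (Real.exp_nonneg _)]
    exact Real.exp_le_exp.2 (le_trans (le_abs_self _) (hfR x)))

lemma Z_pos (hf : Measurable f) (hfR : ∀ x, |f x| ≤ R) :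
    0 < ∫ x, Real.exp (f x) ∂μ := by
  have h : Real.exp (-R) ≤ ∫ x, Real.exp (f x) ∂μ := by
    calc Real.exp (-R) = ∫ _x, Real.exp (-R) ∂μ := by simp
    _ ≤ ∫ x, Real.exp (f x) ∂μ := by
        apply integral_mono (integrable_const _) (exp_comp_integrable hf hfR)
        intro x
        exact Real.exp_le_exp.2 (neg_le_of_abs_le (hfR x))
  linarith [Real.exp_pos (-R)]

lemma lintegral_exp_eq (hf : Measurable f) (hfR : ∀ x, |f x| ≤ R) :
    ∫⁻ x, ENNReal.ofReal (Real.exp (f x)) ∂μ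
      = ENNReal.ofReal (∫ x, Real.exp (f x) ∂μ) :=
  (ofReal_integral_eq_lintegral_ofReal (exp_comp_integrable hf hfR)
    (ae_of_all _ fun x => Real.exp_nonneg _)).symm

lemma tilt_isProb (hf : Measurable f) (hfR : ∀ x, |f x| ≤ R) :
    IsProbabilityMeasure (tilt μ f) := by
  constructor
  rw [tilt, Measure.smul_apply, withDensity_apply _ MeasurableSet.univ,
    setLIntegral_univ, lintegral_exp_eq hf hfR, smul_eq_mul]
  exact ENNReal.inv_mul_cancel (ENNReal.ofReal_pos.mpr (Z_pos hf hfR)).ne'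
    ENNReal.ofReal_ne_top

lemma tilt_integral (hf : Measurable f) (hfR : ∀ x, |f x| ≤ R)
    {u : E → ℝ} (hu : Measurable u) :
    ∫ x, u x ∂(tilt μ f) = (∫ x, Real.exp (f x) ∂μ)⁻¹ * ∫ x, Real.exp (f x) * u x ∂μ := by
  rw [tilt, integral_smul_measure, ENNReal.toReal_inv, ENNReal.toReal_ofReal
    (Z_pos hf hfR).le, smul_eq_mul]
  congr 1
  have hd : (fun y => ENNReal.ofReal (Real.exp (f y)))
      = fun y => (((Real.exp (f y)).toNNReal : ℝ≥0) : ℝ≥0∞) := rfl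
  rw [hd, integral_withDensity_eq_integral_smul
    (f := fun y => (Real.exp (f y)).toNNReal)
    (measurable_real_toNNReal.comp (Real.measurable_exp.comp hf)) u]
  congr 1
  ext x
  rw [NNReal.smul_def, smul_eq_mul, Real.coe_toNNReal _ (Real.exp_nonneg _)]

/-- Minorization of the tilted measure. -/
lemma tilt_minor {η : Measure E} [IsProbabilityMeasure η] {d : ℝ} (hd0 : 0 ≤ d)
    (hle : ENNReal.ofReal d • η ≤ μ) (hf : Measurable f) (hR : 0 ≤ R)
    (hfR : ∀ x, |f x| ≤ R) :
    ENNReal.ofReal (d * Real.exp (-(2*R))) • η ≤ tilt μ f := by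
  rw [Measure.le_iff]
  intro B hB
  rw [tilt, Measure.smul_apply, Measure.smul_apply, withDensity_apply _ hB,
    smul_eq_mul, smul_eq_mul]
  have h1 : ENNReal.ofReal (Real.exp (-R)) * μ B ≤ ∫⁻ x in B, ENNReal.ofReal (Real.exp (f x)) ∂μ := by
    calc ENNReal.ofReal (Real.exp (-R)) * μ B
        = ∫⁻ _x in B, ENNReal.ofReal (Real.exp (-R)) ∂μ := by rw [setLIntegral_const, mul_comm]
      _ ≤ ∫⁻ x in B, ENNReal.ofReal (Real.exp (f x)) ∂μ := by
          apply lintegral_mono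
          intro x
          exact ENNReal.ofReal_le_ofReal (Real.exp_le_exp.2 (neg_le_of_abs_le (hfR x)))
  have h2 : ENNReal.ofReal d * η B ≤ μ B := by
    have := Measure.le_iff.mp hle B hB
    simpa [Measure.smul_apply, smul_eq_mul] using this
  have hZ : (ENNReal.ofReal (∫ x, Real.exp (f x) ∂μ))⁻¹ ≥ (ENNReal.ofReal (Real.exp R))⁻¹ := by
    apply ENNReal.inv_le_inv.mpr
    apply ENNReal.ofReal_le_ofReal
    calc ∫ x, Real.exp (f x) ∂μ ≤ ∫ _x, Real.exp R ∂μ := by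
          apply integral_mono (exp_comp_integrable hf hfR) (integrable_const _)
          intro x
          exact Real.exp_le_exp.2 (le_of_abs_le (hfR x))
      _ = Real.exp R := by simp
  calc ENNReal.ofReal (d * Real.exp (-(2*R))) * η B
      = (ENNReal.ofReal (Real.exp R))⁻¹ * (ENNReal.ofReal (Real.exp (-R)) * (ENNReal.ofReal d * η B)) := by
        rw [← ENNReal.ofReal_inv_of_pos (Real.exp_pos R), ← Real.exp_neg]
        rw [← mul_assoc, ← mul_assoc, ← ENNReal.ofReal_mul (Real.exp_nonneg _),
          ← ENNReal.ofReal_mul (by positivity : (0:ℝ) ≤ Real.exp (-R) * Real.exp (-R))]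
        congr 2
        rw [← Real.exp_add]
        ring_nf
    _ ≤ (ENNReal.ofReal (∫ x, Real.exp (f x) ∂μ))⁻¹ * ∫⁻ x in B, ENNReal.ofReal (Real.exp (f x)) ∂μ := by
        apply mul_le_mul' hZ
        calc ENNReal.ofReal (Real.exp (-R)) * (ENNReal.ofReal d * η B)
            ≤ ENNReal.ofReal (Real.exp (-R)) * μ B := mul_le_mul' le_rfl h2
          _ ≤ _ := h1


/-- Jensen step: `log ∫ e^f − log ∫ e^h ≤ ∫ (f−h) d(tilt μ f)`. -/
lemma log_diff_le_tilt_integral (hf : Measurable f) (hfR : ∀ x, |f x| ≤ R)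
    {h : E → ℝ} (hh : Measurable h) (hhR : ∀ x, |h x| ≤ R) :
    Real.log (∫ x, Real.exp (f x) ∂μ) - Real.log (∫ x, Real.exp (h x) ∂μ)
      ≤ ∫ x, (f x - h x) ∂(tilt μ f) := by
  haveI := tilt_isProb (μ := μ) hf hfR
  have hZf := Z_pos hf hfR (μ := μ)
  have hZh := Z_pos hh hhR (μ := μ)
  have hA : ∫ x, Real.exp (h x - f x) ∂(tilt μ f)
      = (∫ x, Real.exp (f x) ∂μ)⁻¹ * ∫ x, Real.exp (h x) ∂μ := by
    rw [tilt_integral hf hfR (u := fun x => Real.exp (h x - f x)) (Real.measurable_exp.comp (hh.sub hf))]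
    congr 1
    apply integral_congr_ae
    filter_upwards with x
    rw [← Real.exp_add]
    ring_nf
  have hjen : Real.exp (∫ x, (h x - f x) ∂(tilt μ f)) ≤
      (∫ x, Real.exp (f x) ∂μ)⁻¹ * ∫ x, Real.exp (h x) ∂μ := by
    rw [← hA]
    exact exp_integral_le (hh.sub hf) (C := 2*R) (fun x => by
      have := abs_sub (h x) (f x)
      calc |h x - f x| ≤ |h x| + |f x| := abs_sub _ _
        _ ≤ 2 * R := by linarith [hfR x, hhR x])
  have hlog : ∫ x, (h x - f x) ∂(tilt μ f) ≤
      Real.log (∫ x, Real.exp (h x) ∂μ) - Real.log (∫ x, Real.exp (f x) ∂μ) := by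
    calc ∫ x, (h x - f x) ∂(tilt μ f)
        = Real.log (Real.exp (∫ x, (h x - f x) ∂(tilt μ f))) := (Real.log_exp _).symm
      _ ≤ Real.log ((∫ x, Real.exp (f x) ∂μ)⁻¹ * ∫ x, Real.exp (h x) ∂μ) :=
          Real.log_le_log (Real.exp_pos _) hjen
      _ = _ := by rw [Real.log_mul (by positivity) hZh.ne', Real.log_inv]; ring
  have hint : ∫ x, (h x - f x) ∂(tilt μ f) = - ∫ x, (f x - h x) ∂(tilt μ f) := by
    rw [← integral_neg]
    congr 1; ext x; ring
  rw [hint] at hlog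
  linarith

/-- Two-point oscillation bound for differences of entropic values (contraction core). -/
lemma osc_mu_diff {η : Measure E} [IsProbabilityMeasure η] {d : ℝ} (hd0 : 0 ≤ d)
    {μ₁ μ₂ : Measure E} [IsProbabilityMeasure μ₁] [IsProbabilityMeasure μ₂]
    (hle₁ : ENNReal.ofReal d • η ≤ μ₁) (hle₂ : ENNReal.ofReal d • η ≤ μ₂)
    (hf : Measurable f) (hfR : ∀ x, |f x| ≤ R) {h : E → ℝ} (hh : Measurable h)
    (hhR : ∀ x, |h x| ≤ R) (hR : 0 ≤ R) [Nonempty E] {m M : ℝ}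
    (hm : ∀ x, m ≤ f x - h x) (hM : ∀ x, f x - h x ≤ M) :
    (Real.log (∫ x, Real.exp (f x) ∂μ₁) - Real.log (∫ x, Real.exp (h x) ∂μ₁))
      - (Real.log (∫ x, Real.exp (f x) ∂μ₂) - Real.log (∫ x, Real.exp (h x) ∂μ₂))
      ≤ (1 - d * Real.exp (-(2*R))) * (M - m) := by
  haveI := tilt_isProb (μ := μ₁) hf hfR
  haveI := tilt_isProb (μ := μ₂) hh hhR
  set α := d * Real.exp (-(2*R)) with hα
  have hα0 : 0 ≤ α := by positivity
  have hub : Real.log (∫ x, Real.exp (f x) ∂μ₁) - Real.log (∫ x, Real.exp (h x) ∂μ₁)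
      ≤ ∫ x, (f x - h x) ∂(tilt μ₁ f) := log_diff_le_tilt_integral hf hfR hh hhR
  have hlb : ∫ x, (f x - h x) ∂(tilt μ₂ h)
      ≤ Real.log (∫ x, Real.exp (f x) ∂μ₂) - Real.log (∫ x, Real.exp (h x) ∂μ₂) := by
    have := log_diff_le_tilt_integral hh hhR hf hfR (μ := μ₂)
    have hneg : ∫ x, (h x - f x) ∂(tilt μ₂ h) = - ∫ x, (f x - h x) ∂(tilt μ₂ h) := by
      rw [← integral_neg]; congr 1; ext x; ring
    rw [hneg] at this
    linarith
  have hmin₁ := tilt_minor hd0 hle₁ hf hR hfR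
  have hmin₂ := tilt_minor hd0 hle₂ hh hR hhR
  have hub2 : ∫ x, (f x - h x) ∂(tilt μ₁ f) ≤ α * (∫ x, (f x - h x) ∂η) + (1 - α) * M :=
    integral_ub_of_minor hα0 hmin₁ (hf.sub hh) hm hM
  have hlb2 : α * (∫ x, (f x - h x) ∂η) + (1 - α) * m ≤ ∫ x, (f x - h x) ∂(tilt μ₂ h) :=
    integral_lb_of_minor hα0 hmin₂ (hf.sub hh) hm hM
  have hMm : m ≤ M := le_trans (hm (Classical.arbitrary E)) (hM _)
  nlinarith [hub, hlb, hub2, hlb2]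

/-- One-function oscillation bound for entropic values (invariance core). -/
lemma osc_mu [Nonempty E] {η : Measure E} [IsProbabilityMeasure η] {d : ℝ}
    (hd0 : 0 < d) (hd1 : d < 1)
    {μ₁ μ₂ : Measure E} [IsProbabilityMeasure μ₁] [IsProbabilityMeasure μ₂]
    (hle₁ : ENNReal.ofReal d • η ≤ μ₁) (hle₂ : ENNReal.ofReal d • η ≤ μ₂)
    {w : E → ℝ} (hw : Measurable w) {m M : ℝ} (hm : ∀ x, m ≤ w x) (hM : ∀ x, w x ≤ M) :
    Real.log (∫ x, Real.exp (w x) ∂μ₁) - Real.log (∫ x, Real.exp (w x) ∂μ₂)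
      ≤ Real.log (d + (1 - d) * Real.exp (M - m)) := by
  have hmM : m ≤ M := le_trans (hm (Classical.arbitrary E)) (hM _)
  have hexp_m : ∀ x, Real.exp m ≤ Real.exp (w x) := fun x => Real.exp_le_exp.2 (hm x)
  have hexp_M : ∀ x, Real.exp (w x) ≤ Real.exp M := fun x => Real.exp_le_exp.2 (hM x)
  have hwm : Measurable fun x => Real.exp (w x) := Real.measurable_exp.comp hw
  have hub : ∫ x, Real.exp (w x) ∂μ₁
      ≤ d * (∫ x, Real.exp (w x) ∂η) + (1 - d) * Real.exp M :=
    integral_ub_of_minor hd0.le hle₁ hwm hexp_m hexp_M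
  have hlb : d * (∫ x, Real.exp (w x) ∂η) + (1 - d) * Real.exp m
      ≤ ∫ x, Real.exp (w x) ∂μ₂ :=
    integral_lb_of_minor hd0.le hle₂ hwm hexp_m hexp_M
  have hlb1 : d * (∫ x, Real.exp (w x) ∂η) + (1 - d) * Real.exp m
      ≤ ∫ x, Real.exp (w x) ∂μ₁ :=
    integral_lb_of_minor hd0.le hle₁ hwm hexp_m hexp_M
  have hAlb : Real.exp m ≤ ∫ x, Real.exp (w x) ∂η := by
    calc Real.exp m = ∫ _x, Real.exp m ∂η := by simp
      _ ≤ _ := integral_mono (integrable_const _)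
          (integrable_of_abs_le hwm (C := Real.exp M) (fun x => by
            rw [abs_of_nonneg (Real.exp_nonneg _)]; exact hexp_M x)) hexp_m
  set A := d * ∫ x, Real.exp (w x) ∂η with hA
  have hL : 0 < A + (1 - d) * Real.exp m := by
    have : 0 < A := by
      have := Real.exp_pos m
      nlinarith
    nlinarith [Real.exp_pos m]
  have hexpMm : Real.exp (M - m) * Real.exp m = Real.exp M := by
    rw [← Real.exp_add]; ring_nf
  have hone : 1 ≤ Real.exp (M - m) := Real.one_le_exp (by linarith)
  have hkey : A + (1 - d) * Real.exp M
      ≤ (d + (1 - d) * Real.exp (M - m)) * (A + (1 - d) * Real.exp m) := by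
    have hAm : d * Real.exp m ≤ A := mul_le_mul_of_nonneg_left hAlb hd0.le
    have hprod : 0 ≤ (1 - d) * (Real.exp (M - m) - 1) * (A - d * Real.exp m) := by
      apply mul_nonneg (mul_nonneg (by linarith) (by linarith)) (by linarith)
    nlinarith [hprod, hexpMm]
  have hKpos : 0 < d + (1 - d) * Real.exp (M - m) := by nlinarith [Real.exp_pos (M - m)]
  have hμ₁pos : 0 < ∫ x, Real.exp (w x) ∂μ₁ := lt_of_lt_of_le hL hlb1
  calc Real.log (∫ x, Real.exp (w x) ∂μ₁) - Real.log (∫ x, Real.exp (w x) ∂μ₂)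
      ≤ Real.log ((d + (1 - d) * Real.exp (M - m)) * (A + (1 - d) * Real.exp m))
        - Real.log (A + (1 - d) * Real.exp m) := by
        have h1 := Real.log_le_log hμ₁pos (hub.trans hkey)
        have h2 := Real.log_le_log hL hlb
        linarith
    _ = Real.log (d + (1 - d) * Real.exp (M - m)) := by
        rw [Real.log_mul hKpos.ne' hL.ne']; ring

end MPEAux

/-- The span seminorm `‖f‖_sp = (sup f - inf f)/2`. -/
noncomputable def spanSeminorm {E : Type*} (f : E → ℝ) : ℝ :=
  ((⨆ x, f x) - ⨅ x, f x) / 2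

/-- Under the global minorization condition (A.2) with constant `d ∈ (0,1)`, if the bounded
measurable reward `g` satisfies `‖g‖_sp < -(1/2) log (1 - d)`, then a bounded MPE solution
exists. -/
theorem mpe_exists_of_small_span_minorization {E : Type*} [MeasurableSpace E]
    (P : Kernel E E) [IsMarkovKernel P]
    (d : ℝ) (hd : d ∈ Set.Ioo (0 : ℝ) 1)
    (η : Measure E) [IsProbabilityMeasure η]
    (hmin : ∀ x : E, ∀ B : Set E, MeasurableSet B → d * (η B).toReal ≤ (P x B).toReal)
    (g : E → ℝ) (hg_meas : Measurable g) (Cg : ℝ) (hg_bdd : ∀ x, |g x| ≤ Cg)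
    (hg_span : spanSeminorm g < -(1 / 2) * Real.log (1 - d)) :
    ∃ (w : E → ℝ) (lam : ℝ), Measurable w ∧ (∃ C : ℝ, ∀ x, |w x| ≤ C) ∧
      ∀ x : E, w x = g x - lam + Real.log (∫ y, Real.exp (w y) ∂(P x)) := by
  classical
  rcases isEmpty_or_nonempty E with hE | hE
  · exact ⟨fun _ => 0, 0, measurable_const, ⟨0, fun x => isEmptyElim x⟩,
      fun x => isEmptyElim x⟩
  have x₀ : E := hE.some
  have hd0 : 0 < d := hd.1
  have hd1 : d < 1 := hd.2
  have h1d : 0 < 1 - d := by linarith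
  -- span of g
  have hbddA : BddAbove (Set.range g) := ⟨Cg, Set.forall_mem_range.2 fun x => (abs_le.1 (hg_bdd x)).2⟩
  have hbddB : BddBelow (Set.range g) := ⟨-Cg, Set.forall_mem_range.2 fun x => (abs_le.1 (hg_bdd x)).1⟩
  set s : ℝ := (⨆ x, g x) - ⨅ x, g x with hs_def
  have hgle : ∀ x, g x ≤ ⨆ y, g y := fun x => le_ciSup hbddA x
  have hgge : ∀ x, (⨅ y, g y) ≤ g x := fun x => ciInf_le hbddB x
  have hosc_g : ∀ x y, g x - g y ≤ s := fun x y => by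
    have h1 := hgle x; have h2 := hgge y; rw [hs_def]; linarith
  have hs0 : 0 ≤ s := by have h1 := hgle x₀; have h2 := hgge x₀; rw [hs_def]; linarith
  have hslt : s < -Real.log (1 - d) := by
    simp only [spanSeminorm] at hg_span
    rw [hs_def]; linarith
  -- choice of R
  have hDpos : 0 < 1 - (1 - d) * Real.exp s := by
    have h1 : Real.exp s < Real.exp (-Real.log (1 - d)) := Real.exp_lt_exp.2 hslt
    rw [Real.exp_neg, Real.exp_log h1d] at h1
    have h2 : (1 - d) * Real.exp s < (1 - d) * (1 - d)⁻¹ := by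
      exact mul_lt_mul_of_pos_left h1 h1d
    rw [mul_inv_cancel₀ h1d.ne'] at h2
    linarith
  set D : ℝ := 1 - (1 - d) * Real.exp s with hD_def
  set R : ℝ := Real.log (d * Real.exp s / D) with hR_def
  have hargpos : 0 < d * Real.exp s / D := by positivity
  have heR : Real.exp R = d * Real.exp s / D := Real.exp_log hargpos
  have hes1 : 1 ≤ Real.exp s := Real.one_le_exp hs0
  have hRs : s ≤ R := by
    rw [← Real.exp_le_exp, heR]
    rw [le_div_iff₀ hDpos, hD_def]
    nlinarith [mul_le_mul_of_nonneg_left hes1 (mul_nonneg h1d.le (Real.exp_pos s).le),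
      Real.exp_pos s]
  have hR0 : 0 ≤ R := hs0.trans hRs
  have hkey : s + Real.log (d + (1 - d) * Real.exp R) = R := by
    have h2 : d + (1 - d) * Real.exp R = Real.exp (R - s) := by
      rw [Real.exp_sub, heR]
      field_simp
      ring
    rw [h2, Real.log_exp]; ring
  -- contraction constant
  set β : ℝ := 1 - d * Real.exp (-(2 * R)) with hβ_def
  have hexp2R : Real.exp (-(2 * R)) ≤ 1 := Real.exp_le_one_iff.2 (by linarith)
  have hβlt : β < 1 := by
    have := Real.exp_pos (-(2 * R)); rw [hβ_def]; nlinarith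
  have hβ0 : 0 ≤ β := by rw [hβ_def]; nlinarith [Real.exp_pos (-(2 * R))]
  -- minorization as measure inequality
  have hminP : ∀ x : E, ENNReal.ofReal d • η ≤ P x :=
    fun x => MPEAux.measure_le_of_minor hd0.le (hmin x)
  -- the iteration map
  let F : (E → ℝ) → E → ℝ := fun w x =>
    g x - g x₀ + (Real.log (∫ y, Real.exp (w y) ∂(P x)) - Real.log (∫ y, Real.exp (w y) ∂(P x₀)))
  let seq : ℕ → E → ℝ := fun n => Nat.rec (motive := fun _ => E → ℝ) (fun _ => 0) (fun _ ih => F ih) n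
  have hseqS : ∀ n, seq (n + 1) = F (seq n) := fun n => rfl
  -- measurability of the entropic value
  have hμImeas : ∀ w : E → ℝ, Measurable w →
      Measurable fun x => Real.log (∫ y, Real.exp (w y) ∂(P x)) := by
    intro w hw
    have h1 : Measurable fun x => ∫ y, Real.exp (w y) ∂(P x) := by
      have := (MeasureTheory.StronglyMeasurable.integral_kernel_prod_right (κ := P)
        (f := fun _ y => Real.exp (w y))
        ((Real.measurable_exp.comp (hw.comp measurable_snd)).stronglyMeasurable))
      exact this.measurable
    exact Real.measurable_log.comp h1
  -- invariants
  have hInv : ∀ n : ℕ, Measurable (seq n) ∧ seq n x₀ = 0 ∧ ∀ x y, seq n x - seq n y ≤ R := by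
    intro n
    induction n with
    | zero =>
      refine ⟨measurable_const, rfl, fun x y => ?_⟩
      show (0:ℝ) - 0 ≤ R
      simpa using hR0
    | succ n ih =>
      obtain ⟨hmeas, h0, hosc⟩ := ih
      have habs : ∀ x, |seq n x| ≤ R := fun x => abs_le.2 ⟨by
          have := hosc x₀ x; rw [h0] at this; linarith, by
          have := hosc x x₀; rw [h0] at this; linarith⟩
      refine ⟨?_, ?_, ?_⟩
      · exact ((hg_meas.sub measurable_const).add ((hμImeas _ hmeas).sub measurable_const))
      · show g x₀ - g x₀ + (Real.log (∫ y, Real.exp (seq n y) ∂(P x₀))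
          - Real.log (∫ y, Real.exp (seq n y) ∂(P x₀))) = 0
        ring
      · -- oscillation bound
        intro x y
        show (g x - g x₀ + (Real.log (∫ z, Real.exp (seq n z) ∂(P x))
            - Real.log (∫ z, Real.exp (seq n z) ∂(P x₀))))
          - (g y - g x₀ + (Real.log (∫ z, Real.exp (seq n z) ∂(P y))
            - Real.log (∫ z, Real.exp (seq n z) ∂(P x₀)))) ≤ R
        have hbA : BddAbove (Set.range (seq n)) :=
          ⟨R, Set.forall_mem_range.2 fun x => (abs_le.1 (habs x)).2⟩
        have hbB : BddBelow (Set.range (seq n)) :=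
          ⟨-R, Set.forall_mem_range.2 fun x => (abs_le.1 (habs x)).1⟩
        set M : ℝ := ⨆ z, seq n z with hM_def
        set m : ℝ := ⨅ z, seq n z with hm_def
        have hle1 : ∀ z, seq n z ≤ M := fun z => le_ciSup hbA z
        have hle2 : ∀ z, m ≤ seq n z := fun z => ciInf_le hbB z
        have hMm : M - m ≤ R := by
          have h1 : ∀ z, seq n z - R ≤ m := fun z =>
            le_ciInf (fun y => by have := hosc z y; linarith)
          have h2 : M ≤ m + R := ciSup_le (fun z => by have := h1 z; linarith)
          linarith
        have hoscmu := MPEAux.osc_mu (E := E) hd0 hd1 (hminP x) (hminP y) hmeas hle2 hle1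
        have hmono : Real.log (d + (1 - d) * Real.exp (M - m))
            ≤ Real.log (d + (1 - d) * Real.exp R) := by
          apply Real.log_le_log (by nlinarith [Real.exp_pos (M - m)])
          have := Real.exp_le_exp.2 hMm
          nlinarith
        have hg' := hosc_g x y
        have := hkey
        linarith
  -- consecutive differences contract
  have hdiff : ∀ n : ℕ, ∀ x y : E,
      (seq (n + 1) x - seq n x) - (seq (n + 1) y - seq n y) ≤ β ^ n * R := by
    intro n
    induction n with
    | zero =>
      intro x y
      have h := (hInv 1).2.2 x y
      calc (seq (0 + 1) x - seq 0 x) - (seq (0 + 1) y - seq 0 y)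
          = seq 1 x - seq 1 y := by show (seq 1 x - 0) - (seq 1 y - 0) = _; ring
        _ ≤ R := h
        _ = β ^ 0 * R := by ring
    | succ n ih =>
      intro x y
      obtain ⟨hmeas1, h01, hosc1⟩ := hInv (n + 1)
      obtain ⟨hmeas0, h00, hosc0⟩ := hInv n
      have habs1 : ∀ x, |seq (n + 1) x| ≤ R := fun x => abs_le.2 ⟨by
          have := hosc1 x₀ x; rw [h01] at this; linarith, by
          have := hosc1 x x₀; rw [h01] at this; linarith⟩
      have habs0 : ∀ x, |seq n x| ≤ R := fun x => abs_le.2 ⟨by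
          have := hosc0 x₀ x; rw [h00] at this; linarith, by
          have := hosc0 x x₀; rw [h00] at this; linarith⟩
      -- the difference function u := seq (n+1) - seq n
      have hbA : BddAbove (Set.range (fun z => seq (n + 1) z - seq n z)) :=
        ⟨2 * R, Set.forall_mem_range.2 fun z => by
          have := (abs_le.1 (habs1 z)); have := (abs_le.1 (habs0 z)); linarith [(abs_le.1 (habs1 z)).2, (abs_le.1 (habs0 z)).1]⟩
      have hbB : BddBelow (Set.range (fun z => seq (n + 1) z - seq n z)) :=
        ⟨-(2 * R), Set.forall_mem_range.2 fun z => by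
          linarith [(abs_le.1 (habs1 z)).1, (abs_le.1 (habs0 z)).2]⟩
      set M : ℝ := ⨆ z, (seq (n + 1) z - seq n z) with hM_def
      set m : ℝ := ⨅ z, (seq (n + 1) z - seq n z) with hm_def
      have hle1 : ∀ z, seq (n + 1) z - seq n z ≤ M := fun z => le_ciSup hbA z
      have hle2 : ∀ z, m ≤ seq (n + 1) z - seq n z := fun z => ciInf_le hbB z
      have hMm : M - m ≤ β ^ n * R := by
        have h1 : ∀ z, (seq (n + 1) z - seq n z) - β ^ n * R ≤ m := fun z =>
          le_ciInf (fun y => by have := ih z y; linarith)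
        have h2 : M ≤ m + β ^ n * R := ciSup_le (fun z => by have := h1 z; linarith)
        linarith
      have hcore := MPEAux.osc_mu_diff (E := E) hd0.le (hminP x) (hminP y)
        hmeas1 habs1 hmeas0 habs0 hR0 hle2 hle1
      show (g x - g x₀ + (Real.log (∫ z, Real.exp (seq (n + 1) z) ∂(P x))
            - Real.log (∫ z, Real.exp (seq (n + 1) z) ∂(P x₀))))
          - (g x - g x₀ + (Real.log (∫ z, Real.exp (seq n z) ∂(P x))
            - Real.log (∫ z, Real.exp (seq n z) ∂(P x₀))))
          - ((g y - g x₀ + (Real.log (∫ z, Real.exp (seq (n + 1) z) ∂(P y))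
            - Real.log (∫ z, Real.exp (seq (n + 1) z) ∂(P x₀))))
          - (g y - g x₀ + (Real.log (∫ z, Real.exp (seq n z) ∂(P y))
            - Real.log (∫ z, Real.exp (seq n z) ∂(P x₀))))) ≤ β ^ (n + 1) * R
      have hβn : (0:ℝ) ≤ β ^ n * R := by positivity
      have hstep : (1 - d * Real.exp (-(2 * R))) * (M - m) ≤ β ^ (n + 1) * R := by
        rw [← hβ_def, pow_succ]
        calc β * (M - m) ≤ β * (β ^ n * R) := mul_le_mul_of_nonneg_left hMm hβ0
          _ = β ^ n * β * R := by ring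
      linarith [hcore, hstep, mul_le_mul_of_nonneg_left hMm hβ0]

  -- uniform bounds
  have habsS : ∀ n x, |seq n x| ≤ R := by
    intro n x
    obtain ⟨_, h0, hosc⟩ := hInv n
    exact abs_le.2 ⟨by have := hosc x₀ x; rw [h0] at this; linarith,
      by have := hosc x x₀; rw [h0] at this; linarith⟩
  have habsdiff : ∀ n x, |seq (n + 1) x - seq n x| ≤ β ^ n * R := by
    intro n x
    have h1 := hdiff n x x₀
    have h2 := hdiff n x₀ x
    obtain ⟨_, h01, _⟩ := hInv (n + 1)
    obtain ⟨_, h00, _⟩ := hInv n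
    rw [abs_le]
    constructor
    · rw [h01, h00] at h2; linarith
    · rw [h01, h00] at h1; linarith
  have hcauchy : ∀ x, CauchySeq (fun n => seq n x) := by
    intro x
    apply cauchySeq_of_le_geometric β R hβlt
    intro n
    rw [Real.dist_eq, abs_sub_comm]
    calc |seq (n + 1) x - seq n x| ≤ β ^ n * R := habsdiff n x
      _ = R * β ^ n := by ring
  have hlim : ∀ x, ∃ l, Filter.Tendsto (fun n => seq n x) Filter.atTop (nhds l) :=
    fun x => cauchySeq_tendsto_of_complete (hcauchy x)
  choose w hw using hlim
  have hwmeas : Measurable w :=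
    measurable_of_tendsto_metrizable (fun n => (hInv n).1) (tendsto_pi_nhds.2 hw)
  have hwR : ∀ x, |w x| ≤ R := by
    intro x
    exact le_of_tendsto ((hw x).abs) (Filter.Eventually.of_forall fun n => habsS n x)
  -- convergence of integrals
  have hIx : ∀ z : E, Filter.Tendsto (fun n => ∫ y, Real.exp (seq n y) ∂(P z))
      Filter.atTop (nhds (∫ y, Real.exp (w y) ∂(P z))) := by
    intro z
    apply tendsto_integral_of_dominated_convergence (fun _ => Real.exp R)
    · exact fun n => (Real.measurable_exp.comp (hInv n).1).aestronglyMeasurable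
    · exact integrable_const _
    · intro n
      filter_upwards with y
      rw [Real.norm_eq_abs, abs_of_nonneg (Real.exp_nonneg _)]
      exact Real.exp_le_exp.2 (le_of_abs_le (habsS n y))
    · filter_upwards with y
      exact (Real.continuous_exp.continuousAt.tendsto).comp (hw y)
  have hIpos : ∀ z : E, 0 < ∫ y, Real.exp (w y) ∂(P z) :=
    fun z => MPEAux.Z_pos hwmeas hwR
  have hlogI : ∀ z : E, Filter.Tendsto (fun n => Real.log (∫ y, Real.exp (seq n y) ∂(P z)))
      Filter.atTop (nhds (Real.log (∫ y, Real.exp (w y) ∂(P z)))) :=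
    fun z => ((Real.continuousAt_log (hIpos z).ne').tendsto).comp (hIx z)
  -- pass to the limit in the iteration
  have hfix : ∀ x : E, w x = g x - g x₀ + (Real.log (∫ y, Real.exp (w y) ∂(P x))
      - Real.log (∫ y, Real.exp (w y) ∂(P x₀))) := by
    intro x
    have h1 : Filter.Tendsto (fun n => seq (n + 1) x) Filter.atTop (nhds (w x)) :=
      (hw x).comp (Filter.tendsto_add_atTop_nat 1)
    have h2 : Filter.Tendsto (fun n => seq (n + 1) x) Filter.atTop
        (nhds (g x - g x₀ + (Real.log (∫ y, Real.exp (w y) ∂(P x))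
          - Real.log (∫ y, Real.exp (w y) ∂(P x₀))))) := by
      have heq : (fun n => seq (n + 1) x) = fun n =>
          g x - g x₀ + (Real.log (∫ y, Real.exp (seq n y) ∂(P x))
            - Real.log (∫ y, Real.exp (seq n y) ∂(P x₀))) := rfl
      rw [heq]
      exact Filter.Tendsto.const_add _ ((hlogI x).sub (hlogI x₀))
    exact tendsto_nhds_unique h1 h2
  refine ⟨w, g x₀ + Real.log (∫ y, Real.exp (w y) ∂(P x₀)), hwmeas, ⟨R, hwR⟩, fun x => ?_⟩
  rw [hfix x]; ring
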